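/- For the hypercube graph Q_n with n ≥ 2, MEG(Q_n) = 2^n; i.e., the only MEG-set of Q_n is its entire vertex set. -/

import Mathlib

open SimpleGraph

/-- Two vertices `x` and `y` monitor an edge `e` in `G`: there is a shortest path between
them, and `e` lies on every shortest path between `x` and `y`. -/
def Monitors {V : Type*} (G : SimpleGraph V) (x y : V) (e : Sym2 V) : Prop :=
  (∃ p : G.Walk x y, p.IsPath ∧ p.length = G.dist x y) ∧
    ∀ p : G.Walk x y, p.IsPath → p.length = G.dist x y → e ∈ p.edges

/-- `S` is a monitoring edge-geodetic set of `G`. -/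
def IsMEGSet {V : Type*} (G : SimpleGraph V) (S : Set V) : Prop :=
  ∀ e ∈ G.edgeSet, ∃ x ∈ S, ∃ y ∈ S, Monitors G x y e

/-- The minimum size of a monitoring edge-geodetic set of `G`. -/
noncomputable def megNum {V : Type*} (G : SimpleGraph V) : ℕ :=
  sInf {n | ∃ S : Set V, IsMEGSet G S ∧ S.ncard = n}

/-- The set of leaves (degree-1 vertices) of `G`. -/
def leaves {V : Type*} (G : SimpleGraph V) : Set V :=
  {v | (G.neighborSet v).ncard = 1}


/-- The hypercube graph of dimension `n`: vertices are binary strings of length `n`,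
adjacent iff they differ in exactly one bit. -/
def hypercubeGraph (n : ℕ) : SimpleGraph (Fin n → Bool) where
  Adj x y := ∃! i, x i ≠ y i
  symm := by
    constructor
    rintro x y ⟨i, hi, hu⟩
    exact ⟨i, hi.symm, fun j hj => hu j hj.symm⟩
  loopless := by
    constructor
    rintro x ⟨i, hi, -⟩
    exact hi rfl

section Aux
open Finset
variable {n : ℕ}


def hd (x y : Fin n → Bool) : ℕ := (Finset.univ.filter fun i => x i ≠ y i).card

lemma hd_comm (x y : Fin n → Bool) : hd x y = hd y x := by
  unfold hd; congr 1; ext i; simp [ne_comm]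

lemma hd_eq_zero {x y : Fin n → Bool} : hd x y = 0 ↔ x = y := by
  simp [hd, Finset.card_eq_zero, Finset.filter_eq_empty_iff, funext_iff]

lemma adj_iff_hd {x y : Fin n → Bool} : (hypercubeGraph n).Adj x y ↔ hd x y = 1 := by
  constructor
  · rintro ⟨i, hi, hu⟩
    rw [hd, Finset.card_eq_one]
    refine ⟨i, ?_⟩
    ext j
    simp only [mem_filter, mem_univ, true_and, mem_singleton]
    exact ⟨hu j, fun h => h ▸ hi⟩
  · rw [hd, Finset.card_eq_one]
    rintro ⟨i, hi⟩
    have hm : ∀ j, x j ≠ y j ↔ j = i := by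
      intro j
      rw [← Finset.mem_singleton, ← hi]
      simp
    exact ⟨i, (hm i).2 rfl, fun j hj => (hm j).1 hj⟩

lemma hd_triangle (x y z : Fin n → Bool) : hd x z ≤ hd x y + hd y z := by
  have hsub : (Finset.univ.filter fun i => x i ≠ z i) ⊆
      (Finset.univ.filter fun i => x i ≠ y i) ∪ (Finset.univ.filter fun i => y i ≠ z i) := by
    intro i hi
    simp only [mem_filter, mem_univ, true_and, mem_union] at *
    by_contra h
    push_neg at h
    exact hi (h.1.trans h.2)
  exact le_trans (Finset.card_le_card hsub) (Finset.card_union_le _ _)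

lemma hd_le_walk_length {x y : Fin n → Bool} (p : (hypercubeGraph n).Walk x y) :
    hd x y ≤ p.length := by
  induction p with
  | nil => simp [hd_eq_zero.2 rfl]
  | cons h q ih =>
    calc hd _ _ ≤ hd _ _ + hd _ _ := hd_triangle _ _ _
    _ ≤ 1 + _ := by
        exact Nat.add_le_add (le_of_eq (adj_iff_hd.1 h)) ih
    _ = _ := by simp [SimpleGraph.Walk.length_cons]; ring

lemma exists_shortest : ∀ (d : ℕ) (x y : Fin n → Bool), hd x y = d →
    ∃ p : (hypercubeGraph n).Walk x y, p.IsPath ∧ p.length = d ∧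
      ∀ v ∈ p.support, ∀ j, x j = y j → v j = x j := by
  intro d
  induction d with
  | zero =>
    intro x y h
    obtain rfl := hd_eq_zero.1 h
    exact ⟨SimpleGraph.Walk.nil, SimpleGraph.Walk.IsPath.nil, rfl, by simp⟩
  | succ d ih =>
    intro x y h
    have hne : x ≠ y := by
      intro hxy; rw [hd_eq_zero.2 hxy] at h; omega
    have : ∃ i, x i ≠ y i := by
      by_contra hc
      push_neg at hc
      exact hne (funext hc)
    obtain ⟨i, hi⟩ := this
    set x' := Function.update x i (y i) with hx'
    have hadj : (hypercubeGraph n).Adj x x' := by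
      refine ⟨i, ?_, fun j hj => ?_⟩
      · simpa [hx', Function.update_self] using hi
      · by_contra hji
        rw [hx', Function.update_of_ne hji] at hj
        exact hj rfl
    have hfil : (Finset.univ.filter fun j => x' j ≠ y j) =
        (Finset.univ.filter fun j => x j ≠ y j).erase i := by
      ext j
      simp only [mem_filter, mem_univ, true_and, mem_erase]
      by_cases hji : j = i
      · subst hji; simp [hx', Function.update_self]
      · simp [hx', Function.update_of_ne hji, hji]
    have hmem : i ∈ (Finset.univ.filter fun j => x j ≠ y j) := by simp [hi]
    have hd' : hd x' y = d := by
      rw [hd, hfil, Finset.card_erase_of_mem hmem]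
      rw [hd] at h; omega
    obtain ⟨q, hq, hql, hqs⟩ := ih x' y hd'
    have hxq : x ∉ q.support := by
      intro hx
      have := hqs x hx i (by simp [hx', Function.update_self])
      rw [hx', Function.update_self] at this
      exact hi this
    refine ⟨SimpleGraph.Walk.cons hadj q, hq.cons hxq, by simp [hql], ?_⟩
    intro v hv j hj
    rcases (SimpleGraph.Walk.mem_support_iff _).1 hv with rfl | hv'
    · rfl
    · have hji : j ≠ i := fun hji => hi (hji ▸ hj)
      have : x' j = y j → v j = x' j := hqs v (by simpa using hv') j
      rw [hx', Function.update_of_ne hji] at this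
      exact this hj

lemma dist_eq_hd (x y : Fin n → Bool) : (hypercubeGraph n).dist x y = hd x y := by
  obtain ⟨p, _, hpl, _⟩ := exists_shortest (hd x y) x y rfl
  refine le_antisymm (hpl ▸ SimpleGraph.dist_le p) ?_
  have hr : (hypercubeGraph n).Reachable x y := ⟨p⟩
  obtain ⟨q, hq⟩ := hr.exists_walk_length_eq_dist
  exact hq ▸ hd_le_walk_length q

/-- key lemma F: a shortest path flipping coordinate i first -/
lemma exists_shortest_first {x y : Fin n → Bool} {i : Fin n} (hi : x i ≠ y i) :
    ∃ p : (hypercubeGraph n).Walk x y, p.IsPath ∧ p.length = hd x y ∧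
      ∀ e ∈ p.edges, e = s(x, Function.update x i (y i)) ∨ ∀ z ∈ e, z i = y i := by
  set x' := Function.update x i (y i) with hx'
  have hadj : (hypercubeGraph n).Adj x x' := by
    refine ⟨i, ?_, fun j hj => ?_⟩
    · simpa [hx', Function.update_self] using hi
    · by_contra hji
      rw [hx', Function.update_of_ne hji] at hj
      exact hj rfl
  have hfil : (Finset.univ.filter fun j => x' j ≠ y j) =
      (Finset.univ.filter fun j => x j ≠ y j).erase i := by
    ext j
    simp only [mem_filter, mem_univ, true_and, mem_erase]
    by_cases hji : j = i
    · subst hji; simp [hx', Function.update_self]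
    · simp [hx', Function.update_of_ne hji, hji]
  have hmem : i ∈ (Finset.univ.filter fun j => x j ≠ y j) := by simp [hi]
  have hdpos : 1 ≤ hd x y := by
    rw [hd]; exact Finset.card_pos.2 ⟨i, hmem⟩
  have hd' : hd x' y = hd x y - 1 := by
    rw [hd, hfil, Finset.card_erase_of_mem hmem]; rfl
  obtain ⟨q, hq, hql, hqs⟩ := exists_shortest _ x' y rfl
  have hxq : x ∉ q.support := by
    intro hx
    have := hqs x hx i (by simp [hx', Function.update_self])
    rw [hx', Function.update_self] at this
    exact hi this
  refine ⟨SimpleGraph.Walk.cons hadj q, hq.cons hxq, by simp [hql, hd']; omega, ?_⟩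
  intro e he
  rw [SimpleGraph.Walk.edges_cons, List.mem_cons] at he
  rcases he with rfl | he
  · exact Or.inl rfl
  · refine Or.inr ?_
    intro z hz
    induction e with
    | h a b =>
      have ha : a ∈ q.support := q.fst_mem_support_of_mem_edges he
      have hb : b ∈ q.support := q.snd_mem_support_of_mem_edges he
      have hxi : x' i = y i := by simp [hx', Function.update_self]
      rcases Sym2.mem_iff.1 hz with rfl | rfl
      · exact (hqs z ha i hxi).trans hxi
      · exact (hqs z hb i hxi).trans hxi

lemma edges_of_length_one {x y : Fin n → Bool} (p : (hypercubeGraph n).Walk x y)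
    (hp : p.length = 1) : p.edges = [s(x, y)] := by
  cases p with
  | nil => simp at hp
  | cons h q =>
    simp only [SimpleGraph.Walk.length_cons, Nat.add_eq_right] at hp
    have := SimpleGraph.Walk.eq_of_length_eq_zero hp
    subst this
    have : q.edges = [] := List.eq_nil_of_length_eq_zero (by simp [hp])
    simp [this]


lemma monitors_char {x y : Fin n → Bool} {e : Sym2 (Fin n → Bool)}
    (he : e ∈ (hypercubeGraph n).edgeSet) (h : Monitors (hypercubeGraph n) x y e) :
    (hypercubeGraph n).Adj x y ∧ e = s(x, y) := by
  have hne : x ≠ y := by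
    rintro rfl
    have := h.2 SimpleGraph.Walk.nil SimpleGraph.Walk.IsPath.nil
      (by simp [SimpleGraph.dist_self])
    simp at this
  induction e with
  | h u v =>
  rw [SimpleGraph.mem_edgeSet] at he
  obtain ⟨k, hk, hku⟩ := he
  have hd1 : 1 ≤ hd x y := by
    rcases Nat.eq_zero_or_pos (hd x y) with h0 | h0
    · exact absurd (hd_eq_zero.1 h0) hne
    · exact h0
  rcases eq_or_lt_of_le hd1 with hd1 | hd2
  · -- distance 1
    obtain ⟨p, hp, hpl, -⟩ := exists_shortest (hd x y) x y rfl
    have hmem := h.2 p hp (by rw [hpl, dist_eq_hd])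
    rw [edges_of_length_one p (by omega)] at hmem
    simp only [List.mem_singleton] at hmem
    refine ⟨?_, hmem⟩
    rw [adj_iff_hd]
    omega
  · -- distance ≥ 2 : contradiction
    exfalso
    by_cases hxk : x k = y k
    · obtain ⟨p, hp, hpl, hps⟩ := exists_shortest (hd x y) x y rfl
      have hmem := h.2 p hp (by rw [hpl, dist_eq_hd])
      have hu := hps u (p.fst_mem_support_of_mem_edges hmem) k hxk
      have hv := hps v (p.snd_mem_support_of_mem_edges hmem) k hxk
      exact hk (hu.trans hv.symm)
    · have hyk : y k ≠ x k := fun h' => hxk h'.symm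
      obtain ⟨p1, hp1, hp1l, hp1e⟩ := exists_shortest_first hxk
      obtain ⟨p2, hp2, hp2l, hp2e⟩ := exists_shortest_first hyk
      have hm1 := h.2 p1 hp1 (by rw [hp1l, dist_eq_hd])
      have hm2 := h.2 p2.reverse hp2.reverse
        (by rw [SimpleGraph.Walk.length_reverse, hp2l, dist_eq_hd, hd_comm])
      rw [SimpleGraph.Walk.edges_reverse, List.mem_reverse] at hm2
      have he1 : s(u, v) = s(x, Function.update x k (y k)) := by
        rcases hp1e _ hm1 with h1 | h1
        · exact h1
        · exact absurd ((h1 u (by simp)).trans (h1 v (by simp)).symm) hk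
      have he2 : s(u, v) = s(y, Function.update y k (x k)) := by
        rcases hp2e _ hm2 with h1 | h1
        · exact h1
        · exact absurd ((h1 u (by simp)).trans (h1 v (by simp)).symm) hk
      have heq : s(x, Function.update x k (y k)) = s(y, Function.update y k (x k)) :=
        he1 ▸ he2
      rw [Sym2.eq_iff] at heq
      rcases heq with ⟨h1, -⟩ | ⟨h1, h2⟩
      · exact hne h1
      · -- x = update y k (x k), so x and y differ only at k
        have hagree : ∀ j, j ≠ k → x j = y j := by
          intro j hj
          conv_lhs => rw [h1]
          rw [Function.update_of_ne hj]
        have : (Finset.univ.filter fun i => x i ≠ y i) ⊆ {k} := by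
          intro j hj
          simp only [mem_filter, mem_univ, true_and] at hj
          simp only [mem_singleton]
          by_contra hjk
          exact hj (hagree j hjk)
        have := Finset.card_le_card this
        simp only [Finset.card_singleton] at this
        rw [hd] at hd2
        omega


lemma monitors_adj {x y : Fin n → Bool} (h : (hypercubeGraph n).Adj x y) :
    Monitors (hypercubeGraph n) x y s(x, y) := by
  have hdist : (hypercubeGraph n).dist x y = 1 := by
    rw [dist_eq_hd, ← adj_iff_hd.1 h]
  constructor
  · refine ⟨SimpleGraph.Walk.cons h SimpleGraph.Walk.nil, ?_, by simp [hdist]⟩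
    simp [SimpleGraph.Walk.isPath_def, h.ne]
  · intro p _ hpl
    rw [hdist] at hpl
    rw [edges_of_length_one p hpl]
    simp
end Aux

theorem hypercube_MEG (n : ℕ) (hn : 2 ≤ n) :
    megNum (hypercubeGraph n) = 2 ^ n ∧
      ∀ S : Set (Fin n → Bool), IsMEGSet (hypercubeGraph n) S → S = Set.univ := by
  have huniq : ∀ S : Set (Fin n → Bool), IsMEGSet (hypercubeGraph n) S → S = Set.univ := by
    intro S hS
    ext v
    simp only [Set.mem_univ, iff_true]
    set i0 : Fin n := ⟨0, by omega⟩
    set w := Function.update v i0 (!v i0) with hw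
    have hadj : (hypercubeGraph n).Adj v w := by
      refine ⟨i0, ?_, fun j hj => ?_⟩
      · simp [hw, Function.update_self]
      · by_contra hji
        rw [hw, Function.update_of_ne hji] at hj
        exact hj rfl
    obtain ⟨x, hx, y, hy, hmon⟩ := hS s(v, w) hadj
    have := (monitors_char hadj hmon).2
    rw [Sym2.eq_iff] at this
    rcases this with ⟨rfl, -⟩ | ⟨rfl, rfl⟩
    · exact hx
    · exact hy
  refine ⟨?_, huniq⟩
  have hset : {m | ∃ S : Set (Fin n → Bool), IsMEGSet (hypercubeGraph n) S ∧ S.ncard = m}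
      = {2 ^ n} := by
    ext m
    simp only [Set.mem_setOf_eq, Set.mem_singleton_iff]
    constructor
    · rintro ⟨S, hS, rfl⟩
      rw [huniq S hS]
      simp [Set.ncard_univ, Nat.card_eq_fintype_card]
    · rintro rfl
      refine ⟨Set.univ, ?_, by simp [Set.ncard_univ, Nat.card_eq_fintype_card]⟩
      intro e he
      induction e with
      | h u v =>
        rw [SimpleGraph.mem_edgeSet] at he
        exact ⟨u, trivial, v, trivial, monitors_adj he⟩
  rw [megNum, hset, csInf_singleton]
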